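/- Let k be a field and a, b ≥ 1 natural numbers. The fiber product of k[x]/(x^{a+1}) and k[y]/(y^{b+1}) over k (with respect to the augmentation maps sending x ↦ 0, y ↦ 0) is isomorphic as a k-algebra to k[x,y]/(x^{a+1}, y^{b+1}, x·y). -/

import Mathlib

open Polynomial MvPolynomial

lemma powLinIndep (k : Type*) [Field k] (n : ℕ) :
    LinearIndependent k (fun i : Fin (n+1) =>
      (Ideal.Quotient.mk (Ideal.span {(Polynomial.X : Polynomial k)^(n+1)}) Polynomial.X)^(i:ℕ)) := by
  rw [Fintype.linearIndependent_iff]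
  intro c hc
  have key : (∑ i : Fin (n+1), Polynomial.C (c i) * Polynomial.X^(i:ℕ)) ∈
      Ideal.span {(Polynomial.X : Polynomial k)^(n+1)} := by
    rw [← Ideal.Quotient.eq_zero_iff_mem]
    rw [map_sum] at *
    refine Eq.trans (Finset.sum_congr rfl fun i _ => ?_) hc
    rw [map_mul, map_pow]; exact (Algebra.smul_def (A := Polynomial k ⧸ Ideal.span {(Polynomial.X : Polynomial k)^(n+1)}) (c i) _).symm
  rw [Ideal.mem_span_singleton] at key
  have hz : (∑ i : Fin (n+1), Polynomial.C (c i) * Polynomial.X^(i:ℕ)) = 0 := by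
    refine eq_zero_of_dvd_of_degree_lt key ?_
    refine lt_of_le_of_lt (degree_sum_le _ _) ?_
    rw [degree_X_pow]
    refine (Finset.sup_lt_iff (by exact_mod_cast WithBot.bot_lt_coe _)).2 fun i _ => ?_
    refine lt_of_le_of_lt (degree_C_mul_X_pow_le _ _) ?_
    exact_mod_cast i.isLt
  intro i
  have := congrArg (fun p => Polynomial.coeff p i) hz
  simp only [Polynomial.finset_sum_coeff, Polynomial.coeff_C_mul, Polynomial.coeff_X_pow,
    Polynomial.coeff_zero, mul_ite, mul_one, mul_zero] at this
  rw [Finset.sum_eq_single i] at this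
  · simpa using this
  · intro j _ hj; simp [Fin.val_eq_val, Ne.symm hj]
  · simp

set_option maxHeartbeats 1000000 in
set_option synthInstance.maxHeartbeats 400000 in
theorem aux (k : Type*) [Field k] (a b : ℕ) (hb : 1 ≤ b)
    (f : (Polynomial k ⧸ Ideal.span {(Polynomial.X : Polynomial k) ^ (a + 1)}) →ₐ[k] k)
    (g : (Polynomial k ⧸ Ideal.span {(Polynomial.X : Polynomial k) ^ (b + 1)}) →ₐ[k] k)
    (hf : f (Ideal.Quotient.mk _ Polynomial.X) = 0)
    (hg : g (Ideal.Quotient.mk _ Polynomial.X) = 0) :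
    Nonempty ((MvPolynomial (Fin 2) k ⧸
      Ideal.span {(MvPolynomial.X 0 : MvPolynomial (Fin 2) k) ^ (a + 1),
        MvPolynomial.X 1 ^ (b + 1), MvPolynomial.X 0 * MvPolynomial.X 1}) ≃ₐ[k]
      AlgHom.equalizer (f.comp (AlgHom.fst k _ _)) (g.comp (AlgHom.snd k _ _))) := by
  set A := Polynomial k ⧸ Ideal.span {(Polynomial.X : Polynomial k) ^ (a + 1)} with hA
  set B := Polynomial k ⧸ Ideal.span {(Polynomial.X : Polynomial k) ^ (b + 1)} with hB
  set I : Ideal (MvPolynomial (Fin 2) k) :=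
    Ideal.span {(MvPolynomial.X 0 : MvPolynomial (Fin 2) k) ^ (a + 1),
      MvPolynomial.X 1 ^ (b + 1), MvPolynomial.X 0 * MvPolynomial.X 1} with hIdef
  set xA : A := Ideal.Quotient.mk _ Polynomial.X with hxA
  set xB : B := Ideal.Quotient.mk _ Polynomial.X with hxB
  set φ : MvPolynomial (Fin 2) k →ₐ[k] A × B :=
    MvPolynomial.aeval ![(xA, 0), (0, xB)] with hφdef
  have hφ0 : φ (MvPolynomial.X 0) = (xA, 0) := by simp [hφdef]
  have hφ1 : φ (MvPolynomial.X 1) = (0, xB) := by simp [hφdef]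
  have hxApow : xA ^ (a+1) = 0 := by
    rw [hxA, ← map_pow, Ideal.Quotient.eq_zero_iff_mem]
    exact Ideal.subset_span rfl
  have hxBpow : xB ^ (b+1) = 0 := by
    rw [hxB, ← map_pow, Ideal.Quotient.eq_zero_iff_mem]
    exact Ideal.subset_span rfl
  have hker : ∀ p ∈ I, φ p = 0 := by
    have hle : I ≤ RingHom.ker φ.toRingHom := by
      rw [hIdef, Ideal.span_le]
      intro q hq
      simp only [Set.mem_insert_iff, Set.mem_singleton_iff] at hq
      rcases hq with rfl | rfl | rfl <;>
        simp [RingHom.mem_ker, map_pow, map_mul, hφ0, hφ1, Prod.pow_mk, hxApow, hxBpow,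
          Prod.ext_iff, zero_pow (Nat.succ_ne_zero _)]
    intro p hp
    exact hle hp
  set φbar : (MvPolynomial (Fin 2) k ⧸ I) →ₐ[k] A × B := Ideal.Quotient.liftₐ I φ hker
    with hφbar
  have hφbar_mk : ∀ p, φbar (Ideal.Quotient.mk I p) = φ p := by
    intro p; rw [hφbar, Ideal.Quotient.liftₐ_apply]; rfl
  -- spanning family
  set v : Fin (a+1) ⊕ Fin b → (MvPolynomial (Fin 2) k ⧸ I) :=
    Sum.elim (fun i => Ideal.Quotient.mk I (MvPolynomial.X 0 ^ (i:ℕ)))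
      (fun j => Ideal.Quotient.mk I (MvPolynomial.X 1 ^ ((j:ℕ)+1))) with hv
  have hIa : (MvPolynomial.X 0 : MvPolynomial (Fin 2) k) ^ (a+1) ∈ I :=
    Ideal.subset_span (by simp)
  have hIb : (MvPolynomial.X 1 : MvPolynomial (Fin 2) k) ^ (b+1) ∈ I :=
    Ideal.subset_span (by simp)
  have hIxy : (MvPolynomial.X 0 : MvPolynomial (Fin 2) k) * MvPolynomial.X 1 ∈ I :=
    Ideal.subset_span (by simp)
  have hspan : ∀ z : MvPolynomial (Fin 2) k ⧸ I, z ∈ Submodule.span k (Set.range v) := by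
    set M := Submodule.span k (Set.range v) with hM
    have hvmem : ∀ s, v s ∈ M := fun s => Submodule.subset_span ⟨s, rfl⟩
    have hmulX : ∀ (i : Fin 2), ∀ z ∈ M, z * Ideal.Quotient.mk I (MvPolynomial.X i) ∈ M := by
      intro i z hz
      induction hz using Submodule.span_induction with
      | mem x hx =>
        obtain ⟨s, rfl⟩ := hx
        rcases s with i' | j'
        · simp only [hv, Sum.elim_inl]
          rw [← map_mul]
          fin_cases i
          · show Ideal.Quotient.mk I (MvPolynomial.X 0 ^ (i':ℕ) * MvPolynomial.X 0) ∈ M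
            rw [← pow_succ]
            by_cases h : (i' : ℕ) < a
            · have hvv : v (Sum.inl (⟨(i':ℕ)+1, by omega⟩ : Fin (a+1))) =
                  Ideal.Quotient.mk I (MvPolynomial.X 0 ^ ((i':ℕ)+1)) := by
                simp [hv]
              rw [← hvv]; exact hvmem _
            · have hia : (i' : ℕ) = a := by omega
              rw [hia, Ideal.Quotient.eq_zero_iff_mem.2 hIa]
              exact M.zero_mem
          · show Ideal.Quotient.mk I (MvPolynomial.X 0 ^ (i':ℕ) * MvPolynomial.X 1) ∈ M
            by_cases h0 : (i' : ℕ) = 0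
            · rw [h0, pow_zero, one_mul]
              have hvv : v (Sum.inr (⟨0, hb⟩ : Fin b)) =
                  Ideal.Quotient.mk I (MvPolynomial.X 1) := by
                simp [hv]
              rw [← hvv]; exact hvmem _
            · obtain ⟨m, hm⟩ := Nat.exists_eq_succ_of_ne_zero h0
              have hmem0 : (MvPolynomial.X 0 : MvPolynomial (Fin 2) k) ^ (i':ℕ) *
                  MvPolynomial.X 1 ∈ I := by
                have : (MvPolynomial.X 0 : MvPolynomial (Fin 2) k) ^ (i':ℕ) *
                    MvPolynomial.X 1 = MvPolynomial.X 0 ^ m *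
                    (MvPolynomial.X 0 * MvPolynomial.X 1) := by
                  rw [hm, pow_succ]; ring
                rw [this]
                exact I.mul_mem_left _ hIxy
              rw [Ideal.Quotient.eq_zero_iff_mem.2 hmem0]
              exact M.zero_mem
        · simp only [hv, Sum.elim_inr]
          rw [← map_mul]
          fin_cases i
          · show Ideal.Quotient.mk I (MvPolynomial.X 1 ^ ((j':ℕ)+1) * MvPolynomial.X 0) ∈ M
            have hmem0 : (MvPolynomial.X 1 : MvPolynomial (Fin 2) k) ^ ((j':ℕ)+1) *
                MvPolynomial.X 0 ∈ I := by
              have : (MvPolynomial.X 1 : MvPolynomial (Fin 2) k) ^ ((j':ℕ)+1) *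
                  MvPolynomial.X 0 = MvPolynomial.X 1 ^ (j':ℕ) *
                  (MvPolynomial.X 0 * MvPolynomial.X 1) := by ring
              rw [this]
              exact I.mul_mem_left _ hIxy
            rw [Ideal.Quotient.eq_zero_iff_mem.2 hmem0]
            exact M.zero_mem
          · show Ideal.Quotient.mk I (MvPolynomial.X 1 ^ ((j':ℕ)+1) * MvPolynomial.X 1) ∈ M
            rw [← pow_succ]
            by_cases h : (j' : ℕ) + 1 < b
            · have hvv : v (Sum.inr (⟨(j':ℕ)+1, h⟩ : Fin b)) =
                  Ideal.Quotient.mk I (MvPolynomial.X 1 ^ ((j':ℕ)+1+1)) := by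
                simp [hv]
              rw [← hvv]; exact hvmem _
            · have hjb : (j' : ℕ) + 1 = b := by omega
              have : (j':ℕ) + 1 + 1 = b + 1 := by omega
              rw [this, Ideal.Quotient.eq_zero_iff_mem.2 hIb]
              exact M.zero_mem
      | zero => simpa using M.zero_mem
      | add x y _ _ hx hy => rw [add_mul]; exact M.add_mem hx hy
      | smul t x _ hx => rw [smul_mul_assoc]; exact M.smul_mem t hx
    intro z
    obtain ⟨p, rfl⟩ := Ideal.Quotient.mk_surjective z
    induction p using MvPolynomial.induction_on with
    | C t =>
      have hC : Ideal.Quotient.mk I (MvPolynomial.C t) = t • v (Sum.inl 0) := by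
        have h1 : v (Sum.inl 0) = 1 := by simp [hv]
        rw [h1, ← Algebra.algebraMap_eq_smul_one, ← MvPolynomial.algebraMap_eq,
          ← Ideal.Quotient.mkₐ_eq_mk k I]
        exact (Ideal.Quotient.mkₐ k I).commutes t
      rw [hC]
      exact M.smul_mem t (hvmem _)
    | add p q hp hq => rw [map_add]; exact M.add_mem hp hq
    | mul_X p i hp => rw [map_mul]; exact hmulX i _ hp
  have hw : LinearIndependent k (fun s => φbar (v s)) := by
    have hwl : ∀ i : Fin (a+1), φbar (v (Sum.inl i)) = ((xA^(i:ℕ), (0:B)^(i:ℕ)) : A × B) := by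
      intro i
      simp only [hv, Sum.elim_inl, hφbar_mk, map_pow, hφ0, Prod.pow_mk]
    have hwr : ∀ j : Fin b, φbar (v (Sum.inr j)) = ((0, xB^((j:ℕ)+1)) : A × B) := by
      intro j
      simp only [hv, Sum.elim_inr, hφbar_mk, map_pow, hφ1, Prod.pow_mk,
        zero_pow (Nat.succ_ne_zero _)]
    rw [Fintype.linearIndependent_iff]
    intro c hc
    rw [Fintype.sum_sum_type] at hc
    simp only [hwl, hwr] at hc
    have h1 : ∑ i : Fin (a+1), c (Sum.inl i) • xA^(i:ℕ) = 0 := by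
      have := congrArg (LinearMap.fst k A B) hc
      simpa only [map_add, map_sum, map_smul, LinearMap.fst_apply, smul_zero,
        Finset.sum_const_zero, add_zero, map_zero] using this
    have hcl : ∀ i, c (Sum.inl i) = 0 := by
      have hli := powLinIndep k a
      rw [Fintype.linearIndependent_iff] at hli
      exact hli _ h1
    have h2 : ∑ j : Fin b, c (Sum.inr j) • xB^((j:ℕ)+1) = 0 := by
      have := congrArg (LinearMap.snd k A B) hc
      simp only [map_add, map_sum, map_smul, LinearMap.snd_apply, map_zero] at this
      simpa [hcl] using this
    set d : Fin (b+1) → k := fun i =>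
      if h : (i:ℕ) = 0 then 0 else c (Sum.inr ⟨(i:ℕ)-1, by omega⟩) with hd
    have hdsum : ∑ i : Fin (b+1), d i • xB^(i:ℕ) = 0 := by
      rw [Fin.sum_univ_succ]
      have hd0 : d 0 = 0 := by simp [hd]
      have hds : ∀ j : Fin b, d j.succ = c (Sum.inr j) := by
        intro j
        simp only [hd, Fin.val_succ, Nat.succ_ne_zero, dif_neg, Nat.add_sub_cancel]
        congr
      rw [hd0, zero_smul, zero_add]
      rw [show (0:B) = ∑ j : Fin b, c (Sum.inr j) • xB^((j:ℕ)+1) from h2.symm]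
      refine Finset.sum_congr rfl fun j _ => ?_
      rw [hds j, Fin.val_succ]
    have hli := powLinIndep k b
    rw [Fintype.linearIndependent_iff] at hli
    have hdz := hli d hdsum
    intro s
    rcases s with i | j
    · exact hcl i
    · have := hdz j.succ
      simp only [hd, Fin.val_succ, Nat.succ_ne_zero, dif_neg, Nat.add_sub_cancel] at this
      convert this using 2
      simp
  have hinj : Function.Injective φbar := by
    rw [injective_iff_map_eq_zero]
    intro z hz
    obtain ⟨c, hc⟩ := (Submodule.mem_span_range_iff_exists_fun k).1 (hspan z)
    have : ∀ s, c s = 0 := by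
      rw [Fintype.linearIndependent_iff] at hw
      refine hw c ?_
      have hz2 : φbar.toLinearMap (∑ s, c s • v s) = 0 := by rw [hc]; exact hz
      rw [map_sum] at hz2
      simpa only [map_smul, AlgHom.toLinearMap_apply] using hz2
    rw [← hc]
    simp [this]
  have hmem : ∀ z, φbar z ∈
      AlgHom.equalizer (f.comp (AlgHom.fst k A B)) (g.comp (AlgHom.snd k A B)) := by
    intro z
    obtain ⟨p, rfl⟩ := Ideal.Quotient.mk_surjective z
    rw [hφbar_mk]
    have hhom : ((f.comp (AlgHom.fst k A B)).comp φ) = ((g.comp (AlgHom.snd k A B)).comp φ) := by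
      apply MvPolynomial.algHom_ext
      intro i
      have fstap : ∀ (x : A) (y : B), AlgHom.fst k A B (x, y) = x := fun _ _ => rfl
      have sndap : ∀ (x : A) (y : B), AlgHom.snd k A B (x, y) = y := fun _ _ => rfl
      fin_cases i <;> simp [hφ0, hφ1, fstap, sndap, hf, hg, hxA, hxB] <;> simp only [← hxA, ← hxB, hf, hg]
    exact congrFun (congrArg (fun (h : _ →ₐ[k] k) => (h : _ → k)) hhom) p
  have hsurj : ∀ uv : A × B,
      uv ∈ AlgHom.equalizer (f.comp (AlgHom.fst k A B)) (g.comp (AlgHom.snd k A B)) →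
      ∃ z, φbar z = uv := by
    rintro ⟨u, w⟩ huv
    rw [AlgHom.mem_equalizer] at huv
    obtain ⟨p, rfl⟩ := Ideal.Quotient.mk_surjective u
    obtain ⟨q, rfl⟩ := Ideal.Quotient.mk_surjective w
    have hmkA : ∀ r : Polynomial k,
        (Ideal.Quotient.mk (Ideal.span {(Polynomial.X : Polynomial k)^(a+1)})) r =
          Polynomial.aeval xA r := by
      intro r
      conv_lhs => rw [← Polynomial.aeval_X_left_apply r]
      rw [← Ideal.Quotient.mkₐ_eq_mk k]
      exact (Polynomial.aeval_algHom_apply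
        (Ideal.Quotient.mkₐ k (Ideal.span {(Polynomial.X : Polynomial k)^(a+1)}))
        Polynomial.X r).symm
    have hmkB : ∀ r : Polynomial k,
        (Ideal.Quotient.mk (Ideal.span {(Polynomial.X : Polynomial k)^(b+1)})) r =
          Polynomial.aeval xB r := by
      intro r
      conv_lhs => rw [← Polynomial.aeval_X_left_apply r]
      rw [← Ideal.Quotient.mkₐ_eq_mk k]
      exact (Polynomial.aeval_algHom_apply
        (Ideal.Quotient.mkₐ k (Ideal.span {(Polynomial.X : Polynomial k)^(b+1)}))
        Polynomial.X r).symm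
    have hpq : Polynomial.aeval (0:k) p = Polynomial.aeval (0:k) q := by
      have h1 : (f.comp (AlgHom.fst k A B)) (Ideal.Quotient.mk _ p, Ideal.Quotient.mk _ q)
          = Polynomial.aeval (0:k) p := by
        show f (Ideal.Quotient.mk _ p) = _
        rw [hmkA, ← Polynomial.aeval_algHom_apply f xA p, hf]
      have h2 : (g.comp (AlgHom.snd k A B)) (Ideal.Quotient.mk _ p, Ideal.Quotient.mk _ q)
          = Polynomial.aeval (0:k) q := by
        show g (Ideal.Quotient.mk _ q) = _
        rw [hmkB, ← Polynomial.aeval_algHom_apply g xB q, hg]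
      rw [← h1, ← h2, huv]
    set P : MvPolynomial (Fin 2) k :=
      Polynomial.aeval (MvPolynomial.X 0 : MvPolynomial (Fin 2) k) p +
        Polynomial.aeval (MvPolynomial.X 1 : MvPolynomial (Fin 2) k) q -
        MvPolynomial.C (Polynomial.aeval (0:k) p) with hP
    refine ⟨Ideal.Quotient.mk I P, ?_⟩
    rw [hφbar_mk]
    have haev0 : ∀ (C : Type _) (inst : CommRing C) (instA : Algebra k C) (r : Polynomial k),
        Polynomial.aeval (0 : C) r = algebraMap k C (Polynomial.aeval (0:k) r) := by
      intro C _ _ r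
      have := Polynomial.aeval_algHom_apply (Algebra.ofId k C) (0:k) r
      simpa [Algebra.ofId_apply] using this
    have hfst : (AlgHom.fst k A B) (φ P) = Ideal.Quotient.mk _ p := by
      have key : ∀ r : MvPolynomial (Fin 2) k,
          (AlgHom.fst k A B) (φ r) = ((AlgHom.fst k A B).comp φ) r := fun r => rfl
      rw [key, hP, map_sub, map_add]
      have e0 : ((AlgHom.fst k A B).comp φ) (Polynomial.aeval (MvPolynomial.X 0) p)
          = Polynomial.aeval xA p := by
        rw [← Polynomial.aeval_algHom_apply ((AlgHom.fst k A B).comp φ) (MvPolynomial.X 0) p]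
        congr 1
        rw [AlgHom.comp_apply, hφ0]
        rfl
      have e1 : ((AlgHom.fst k A B).comp φ) (Polynomial.aeval (MvPolynomial.X 1) q)
          = algebraMap k A (Polynomial.aeval (0:k) q) := by
        rw [← Polynomial.aeval_algHom_apply ((AlgHom.fst k A B).comp φ) (MvPolynomial.X 1) q]
        rw [show ((AlgHom.fst k A B).comp φ) (MvPolynomial.X 1) = (0:A) from by
          rw [AlgHom.comp_apply, hφ1]; rfl]
        exact haev0 A _ _ q
      have e2 : ((AlgHom.fst k A B).comp φ) (MvPolynomial.C (Polynomial.aeval (0:k) p))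
          = algebraMap k A (Polynomial.aeval (0:k) p) := by
        rw [← MvPolynomial.algebraMap_eq]
        exact ((AlgHom.fst k A B).comp φ).commutes _
      rw [e0, e1, e2, ← hpq, hmkA p]
      ring
    have hsnd : (AlgHom.snd k A B) (φ P) = Ideal.Quotient.mk _ q := by
      have key : ∀ r : MvPolynomial (Fin 2) k,
          (AlgHom.snd k A B) (φ r) = ((AlgHom.snd k A B).comp φ) r := fun r => rfl
      rw [key, hP, map_sub, map_add]
      have e0 : ((AlgHom.snd k A B).comp φ) (Polynomial.aeval (MvPolynomial.X 0) p)
          = algebraMap k B (Polynomial.aeval (0:k) p) := by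
        rw [← Polynomial.aeval_algHom_apply ((AlgHom.snd k A B).comp φ) (MvPolynomial.X 0) p]
        rw [show ((AlgHom.snd k A B).comp φ) (MvPolynomial.X 0) = (0:B) from by
          rw [AlgHom.comp_apply, hφ0]; rfl]
        exact haev0 B _ _ p
      have e1 : ((AlgHom.snd k A B).comp φ) (Polynomial.aeval (MvPolynomial.X 1) q)
          = Polynomial.aeval xB q := by
        rw [← Polynomial.aeval_algHom_apply ((AlgHom.snd k A B).comp φ) (MvPolynomial.X 1) q]
        congr 1
        rw [AlgHom.comp_apply, hφ1]
        rfl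
      have e2 : ((AlgHom.snd k A B).comp φ) (MvPolynomial.C (Polynomial.aeval (0:k) p))
          = algebraMap k B (Polynomial.aeval (0:k) p) := by
        rw [← MvPolynomial.algebraMap_eq]
        exact ((AlgHom.snd k A B).comp φ).commutes _
      rw [e0, e1, e2, hmkB q]
      ring
    exact Prod.ext hfst hsnd
  refine ⟨AlgEquiv.ofBijective (φbar.codRestrict _ hmem) ⟨?_, ?_⟩⟩
  · intro x y hxy
    exact hinj (congrArg Subtype.val hxy)
  · rintro ⟨uv, huv⟩
    obtain ⟨z, hz⟩ := hsurj uv huv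
    exact ⟨z, Subtype.ext hz⟩

open Polynomial MvPolynomial in
theorem stmt_6 (k : Type*) [Field k] (a b : ℕ) (ha : 1 ≤ a) (hb : 1 ≤ b) :
    letI A := Polynomial k ⧸ Ideal.span {(Polynomial.X : Polynomial k) ^ (a + 1)}
    letI B := Polynomial k ⧸ Ideal.span {(Polynomial.X : Polynomial k) ^ (b + 1)}
    letI R := MvPolynomial (Fin 2) k ⧸
      Ideal.span {(MvPolynomial.X 0 : MvPolynomial (Fin 2) k) ^ (a + 1),
        MvPolynomial.X 1 ^ (b + 1), MvPolynomial.X 0 * MvPolynomial.X 1}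
    ∀ (f : A →ₐ[k] k) (g : B →ₐ[k] k),
      f (Ideal.Quotient.mk _ Polynomial.X) = 0 →
      g (Ideal.Quotient.mk _ Polynomial.X) = 0 →
      Nonempty (R ≃ₐ[k]
        AlgHom.equalizer (f.comp (AlgHom.fst k A B)) (g.comp (AlgHom.snd k A B))) := by
  intro f g hf hg
  exact aux k a b hb f g hf hg
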